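/- (Uniqueness of pivots in RU decomposition) Suppose D V = R and D V' = R' where V, V' are invertible upper-triangular and R, R' are both reduced. Then R and R' have the same set of (column index, pivot row) pairs: for every j, R[j] = 0 iff R'[j] = 0, and if R[j] ≠ 0 then piv(R[j]) = piv(R'[j]). -/
import Mathlib

open Finset

/-- Key lemma: for a reduced matrix `R`, any linear combination of its columns
with a nonzero coefficient on a nonzero column is nonzero, with a witness row
at the maximum pivot. -/
lemma key_lemma {m n : ℕ} {k : Type*} [Field k]
    (R : Matrix (Fin m) (Fin n) k) (p : Fin n → Fin m)
    (hp : ∀ j : Fin n, (∃ i, R i j ≠ 0) →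
      (R (p j) j ≠ 0 ∧ ∀ i : Fin m, p j < i → R i j = 0))
    (hred : ∀ j j' : Fin n, (∃ i, R i j ≠ 0) → (∃ i, R i j' ≠ 0) → j ≠ j' → p j ≠ p j')
    (c : Fin n → k) (j0 : Fin n) (hc : c j0 ≠ 0) (hR0 : ∃ r, R r j0 ≠ 0) :
    ∃ i0 : Fin n, (∃ r, R r i0 ≠ 0) ∧ p j0 ≤ p i0 ∧ (∑ i, c i * R (p i0) i) ≠ 0 := by
  classical
  set S : Finset (Fin n) := univ.filter (fun i => c i ≠ 0 ∧ ∃ r, R r i ≠ 0) with hS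
  have hj0S : j0 ∈ S := by simp [hS, hc, hR0]
  obtain ⟨i0, hi0S, hmax⟩ := S.exists_max_image p ⟨j0, hj0S⟩
  have hi0 : c i0 ≠ 0 ∧ ∃ r, R r i0 ≠ 0 := by simpa [hS] using hi0S
  refine ⟨i0, hi0.2, hmax j0 hj0S, ?_⟩
  have hsum : (∑ i, c i * R (p i0) i) = c i0 * R (p i0) i0 := by
    refine Finset.sum_eq_single i0 (fun i _ hne => ?_) (by simp)
    by_cases hci : c i = 0
    · simp [hci]
    by_cases hRi : ∃ r, R r i ≠ 0
    · have hiS : i ∈ S := by simp [hS, hci, hRi]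
      have hlt : p i < p i0 := lt_of_le_of_ne (hmax i hiS) (hred i i0 hRi hi0.2 hne)
      rw [(hp i hRi).2 _ hlt, mul_zero]
    · push_neg at hRi
      simp [hRi]
  rw [hsum]
  exact mul_ne_zero hi0.1 (hp i0 hi0.2).1

/-- One direction: if `R' = R * W` with `W` upper triangular with nonzero diagonal,
and `R` is reduced, then every nonzero column of `R` is nonzero in `R'` and
`p j ≤ p' j`. -/
lemma half_lemma {m n : ℕ} {k : Type*} [Field k]
    (R R' : Matrix (Fin m) (Fin n) k) (W : Matrix (Fin n) (Fin n) k) (hRW : R * W = R')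
    (hWd : ∀ j : Fin n, W j j ≠ 0)
    (p p' : Fin n → Fin m)
    (hp : ∀ j : Fin n, (∃ i, R i j ≠ 0) →
      (R (p j) j ≠ 0 ∧ ∀ i : Fin m, p j < i → R i j = 0))
    (hp' : ∀ j : Fin n, (∃ i, R' i j ≠ 0) →
      (R' (p' j) j ≠ 0 ∧ ∀ i : Fin m, p' j < i → R' i j = 0))
    (hred : ∀ j j' : Fin n, (∃ i, R i j ≠ 0) → (∃ i, R i j' ≠ 0) → j ≠ j' → p j ≠ p j') :
    ∀ j : Fin n, (∃ i, R i j ≠ 0) → ((∃ i, R' i j ≠ 0) ∧ p j ≤ p' j) := by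
  intro j hj
  obtain ⟨i0, hi0, hle, hne⟩ := key_lemma R p hp hred (fun i => W i j) j (hWd j) hj
  have hcol : R' (p i0) j = ∑ i, W i j * R (p i0) i := by
    rw [← hRW, Matrix.mul_apply]
    exact Finset.sum_congr rfl fun i _ => mul_comm _ _
  have hne' : R' (p i0) j ≠ 0 := by rw [hcol]; exact hne
  have hex : ∃ i, R' i j ≠ 0 := ⟨p i0, hne'⟩
  refine ⟨hex, le_trans hle ?_⟩
  by_contra h
  exact hne' ((hp' j hex).2 _ (lt_of_not_ge h))

/-- (Uniqueness of pivots in RU decompositions) If D V = R and D V' = R' with V, V'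
invertible upper-triangular and R, R' reduced (with pivot maps p, p' for nonzero
columns), then R and R' have the same zero columns and the same pivots on nonzero
columns. -/
theorem stmt_17 {m n : ℕ} {k : Type*} [Field k]
    (D R R' : Matrix (Fin m) (Fin n) k) (V V' : Matrix (Fin n) (Fin n) k)
    (hR : D * V = R) (hR' : D * V' = R')
    (hUT : ∀ i j : Fin n, j < i → V i j = 0) (hV : IsUnit V)
    (hUT' : ∀ i j : Fin n, j < i → V' i j = 0) (hV' : IsUnit V')
    (p p' : Fin n → Fin m)
    (hp : ∀ j : Fin n, (∃ i, R i j ≠ 0) →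
      (R (p j) j ≠ 0 ∧ ∀ i : Fin m, p j < i → R i j = 0))
    (hp' : ∀ j : Fin n, (∃ i, R' i j ≠ 0) →
      (R' (p' j) j ≠ 0 ∧ ∀ i : Fin m, p' j < i → R' i j = 0))
    (hred : ∀ j j' : Fin n, (∃ i, R i j ≠ 0) → (∃ i, R i j' ≠ 0) → j ≠ j' → p j ≠ p j')
    (hred' : ∀ j j' : Fin n, (∃ i, R' i j ≠ 0) → (∃ i, R' i j' ≠ 0) → j ≠ j' →
      p' j ≠ p' j') :
    ∀ j : Fin n, ((∃ i, R i j ≠ 0) ↔ (∃ i, R' i j ≠ 0)) ∧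
      ((∃ i, R i j ≠ 0) → p j = p' j) := by
  classical
  have hVdet : IsUnit V.det := (Matrix.isUnit_iff_isUnit_det V).mp hV
  have hV'det : IsUnit V'.det := (Matrix.isUnit_iff_isUnit_det V').mp hV'
  haveI : Invertible V := V.invertibleOfIsUnitDet hVdet
  haveI : Invertible V' := V'.invertibleOfIsUnitDet hV'det
  have hBT : V.BlockTriangular id := hUT
  have hBT' : V'.BlockTriangular id := hUT'
  have hBTi : (V⁻¹).BlockTriangular id := Matrix.blockTriangular_inv_of_blockTriangular hBT
  have hBTi' : (V'⁻¹).BlockTriangular id := Matrix.blockTriangular_inv_of_blockTriangular hBT'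
  set W : Matrix (Fin n) (Fin n) k := V⁻¹ * V' with hWdef
  set W' : Matrix (Fin n) (Fin n) k := V'⁻¹ * V with hW'def
  have hWBT : W.BlockTriangular id := hBTi.mul hBT'
  have hW'BT : W'.BlockTriangular id := hBTi'.mul hBT
  have hWdet : W.det ≠ 0 := by
    rw [hWdef, Matrix.det_mul, Matrix.det_nonsing_inv, Ring.inverse_eq_inv]
    exact mul_ne_zero (inv_ne_zero hVdet.ne_zero) hV'det.ne_zero
  have hW'det : W'.det ≠ 0 := by
    rw [hW'def, Matrix.det_mul, Matrix.det_nonsing_inv, Ring.inverse_eq_inv]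
    exact mul_ne_zero (inv_ne_zero hV'det.ne_zero) hVdet.ne_zero
  have hWd : ∀ j : Fin n, W j j ≠ 0 := by
    intro j
    rw [Matrix.det_of_upperTriangular hWBT] at hWdet
    exact fun h => hWdet (Finset.prod_eq_zero (Finset.mem_univ j) h)
  have hW'd : ∀ j : Fin n, W' j j ≠ 0 := by
    intro j
    rw [Matrix.det_of_upperTriangular hW'BT] at hW'det
    exact fun h => hW'det (Finset.prod_eq_zero (Finset.mem_univ j) h)
  have hRW : R * W = R' := by
    rw [← hR, ← hR', hWdef, ← Matrix.mul_assoc, Matrix.mul_assoc D V V⁻¹,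
      Matrix.mul_inv_of_invertible, Matrix.mul_one]
  have hRW' : R' * W' = R := by
    rw [← hR, ← hR', hW'def, ← Matrix.mul_assoc, Matrix.mul_assoc D V' V'⁻¹,
      Matrix.mul_inv_of_invertible, Matrix.mul_one]
  have h1 := half_lemma R R' W hRW hWd p p' hp hp' hred
  have h2 := half_lemma R' R W' hRW' hW'd p' p hp' hp hred'
  intro j
  refine ⟨⟨fun h => (h1 j h).1, fun h => (h2 j h).1⟩, fun h => ?_⟩
  exact le_antisymm (h1 j h).2 (h2 j ((h1 j h).1)).2
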